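/- Let λ > 0 with λ ≠ 1, and define f : D → ℂ on a small disk around 0 by f(ρ) = ρ / (1 - (log λ)·|ρ|) (with f(0) = 0). Then f is continuously differentiable (C¹) at 0 as a map ℝ² → ℝ². -/

import Mathlib

open Asymptotics ContinuousLinearMap Filter Topology

/-- derivative of the norm on ℂ away from 0 -/
lemma hasFDerivAt_norm_complex {ρ : ℂ} (hρ : ρ ≠ 0) :
    HasFDerivAt (fun x : ℂ => ‖x‖) (‖ρ‖⁻¹ • innerSL ℝ ρ) ρ := by
  have hn : (0:ℝ) < ‖ρ‖ := norm_pos_iff.2 hρ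
  have hsq : HasFDerivAt (fun x : ℂ => ‖x‖ ^ 2) (2 • innerSL ℝ ρ) ρ :=
    (hasStrictFDerivAt_norm_sq ρ).hasFDerivAt
  have hsqrt : HasDerivAt Real.sqrt (1 / (2 * Real.sqrt (‖ρ‖ ^ 2))) (‖ρ‖ ^ 2) :=
    Real.hasDerivAt_sqrt (by positivity)
  have := hsqrt.comp_hasFDerivAt ρ hsq
  have heq : (fun x : ℂ => Real.sqrt (‖x‖ ^ 2)) = fun x : ℂ => ‖x‖ := by
    funext x; rw [Real.sqrt_sq (norm_nonneg x)]
  rw [Function.comp_def, heq] at this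
  refine this.congr_fderiv ?_
  rw [Real.sqrt_sq hn.le]
  ext v
  simp only [ContinuousLinearMap.smul_apply, smul_eq_mul]
  push_cast
  ring

set_option maxHeartbeats 2000000 in
lemma key (c : ℝ) :
    ContDiffAt ℝ 1 (fun ρ : ℂ => ρ / (1 - (c : ℂ) * (‖ρ‖ : ℂ))) 0 := by
  set g : ℂ → ℝ := fun ρ => (1 - c * ‖ρ‖)⁻¹ with hg_def
  have hfg : ∀ ρ : ℂ, ρ / (1 - (c : ℂ) * (‖ρ‖ : ℂ)) = g ρ • ρ := by
    intro ρ
    rw [hg_def]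
    simp only [Complex.real_smul, div_eq_mul_inv]
    push_cast
    ring
  set Q : ℂ → ℂ →L[ℝ] ℂ := fun ρ => (innerSL ℝ ρ).smulRight ρ with hQ_def
  have hQcont : Continuous Q := by
    have h1 : Continuous fun p : (ℂ →L[ℝ] ℝ) × ℂ => p.1.smulRight p.2 :=
      (isBoundedBilinearMap_smulRight (𝕜 := ℝ) (E := ℂ) (F := ℂ)).continuous
    exact h1.comp ((innerSL ℝ).continuous.prodMk continuous_id)
  have hQnorm : ∀ ρ : ℂ, ‖Q ρ‖ ≤ ‖ρ‖ * ‖ρ‖ := by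
    intro ρ
    calc ‖Q ρ‖ ≤ ‖innerSL ℝ ρ‖ * ‖ρ‖ := norm_smulRight_apply _ _ |>.le
    _ = ‖ρ‖ * ‖ρ‖ := by rw [innerSL_apply_norm]
  set f' : ℂ → ℂ →L[ℝ] ℂ := fun ρ =>
    g ρ • ContinuousLinearMap.id ℝ ℂ + (c * g ρ ^ 2 * ‖ρ‖⁻¹) • Q ρ with hf'_def
  -- set of definition
  set ε : ℝ := (2 * (|c| + 1))⁻¹ with hε_def
  have hεpos : 0 < ε := by positivity
  have hden : ∀ ρ : ℂ, ρ ∈ Metric.ball (0:ℂ) ε → 1 - c * ‖ρ‖ ≠ 0 := by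
    intro ρ hρ
    have h1 : ‖ρ‖ < ε := by simpa [Metric.mem_ball] using hρ
    have h2 : |c * ‖ρ‖| < 1 := by
      rw [abs_mul, abs_norm]
      calc |c| * ‖ρ‖ ≤ (|c| + 1) * ‖ρ‖ := by nlinarith [norm_nonneg ρ, abs_nonneg c]
      _ < (|c| + 1) * ε := by
          apply mul_lt_mul_of_pos_left h1 (by positivity)
      _ = (|c| + 1) / (2 * (|c| + 1)) := by rw [hε_def]; ring
      _ < 1 := by
          rw [div_lt_one (by positivity)]; nlinarith [abs_nonneg c]
    have := abs_lt.1 h2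
    linarith [this.1, this.2]
  have hg_cont : ContinuousOn g (Metric.ball (0:ℂ) ε) := by
    apply ContinuousOn.inv₀
    · exact (continuous_const.sub (continuous_const.mul continuous_norm)).continuousOn
    · exact hden
  rw [contDiffAt_one_iff]
  refine ⟨f', Metric.ball 0 ε, Metric.ball_mem_nhds _ hεpos, ?_, ?_⟩
  · -- continuity of f'
    intro ρ hρ
    rcases eq_or_ne ρ 0 with rfl | hρ0
    · -- continuity at 0
      apply ContinuousWithinAt.add
      · exact ((hg_cont 0 hρ).smul continuousWithinAt_const)
      · -- second term tends to 0 = its value at 0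
        have hval : (c * g 0 ^ 2 * ‖(0:ℂ)‖⁻¹) • Q 0 = 0 := by
          rw [show c * g 0 ^ 2 * ‖(0:ℂ)‖⁻¹ = 0 by simp]
          exact zero_smul ℝ (Q 0)
        rw [ContinuousWithinAt, hval]
        apply Filter.Tendsto.mono_left _ nhdsWithin_le_nhds
        apply squeeze_zero_norm (a := fun ρ : ℂ => |c * g ρ ^ 2| * ‖ρ‖)
        · intro x
          rw [norm_smul]
          calc ‖c * g x ^ 2 * ‖x‖⁻¹‖ * ‖Q x‖
              ≤ (|c * g x ^ 2| * ‖x‖⁻¹) * (‖x‖ * ‖x‖) := by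
                rw [Real.norm_eq_abs, abs_mul (c * g x ^ 2), abs_inv, abs_norm]
                apply mul_le_mul_of_nonneg_left (hQnorm x) (by positivity)
          _ ≤ |c * g x ^ 2| * ‖x‖ := by
                rcases eq_or_ne x 0 with rfl | hx
                · simp
                · have : ‖x‖⁻¹ * (‖x‖ * ‖x‖) = ‖x‖ := by
                    field_simp
                  rw [mul_assoc, this]
        · have : Filter.Tendsto (fun ρ : ℂ => |c * g ρ ^ 2| * ‖ρ‖) (𝓝 0)
              (𝓝 (|c * g 0 ^ 2| * ‖(0:ℂ)‖)) := by
            apply Filter.Tendsto.mul _ (continuous_norm.tendsto 0)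
            apply Filter.Tendsto.abs
            apply Filter.Tendsto.mul tendsto_const_nhds
            apply Filter.Tendsto.pow
            have : ContinuousAt g 0 := by
              apply ContinuousAt.inv₀
              · exact (continuous_const.sub (continuous_const.mul continuous_norm)).continuousAt
              · simpa using hden 0 (Metric.mem_ball_self hεpos)
            exact this.tendsto
          simpa using this
    · -- continuity at ρ ≠ 0
      apply ContinuousWithinAt.add
      · exact (hg_cont ρ hρ).smul continuousWithinAt_const
      · apply ContinuousWithinAt.fun_smul _ (hQcont.continuousWithinAt)
        apply ContinuousWithinAt.mul
        · exact ((continuousWithinAt_const.mul ((hg_cont ρ hρ).pow 2)))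
        · exact ((continuous_norm.continuousWithinAt).inv₀ (norm_ne_zero_iff.2 hρ0))
  · -- derivatives
    intro ρ hρ
    have hfg' : (fun ρ : ℂ => ρ / (1 - (c : ℂ) * (‖ρ‖ : ℂ))) = fun ρ => g ρ • ρ :=
      funext hfg
    rw [hfg']
    rcases eq_or_ne ρ 0 with rfl | hρ0
    · -- derivative at 0 is the identity
      have hf'0 : f' 0 = ContinuousLinearMap.id ℝ ℂ := by
        have h1 : f' 0 = g 0 • ContinuousLinearMap.id ℝ ℂ
            + (c * g 0 ^ 2 * ‖(0:ℂ)‖⁻¹) • Q 0 := rfl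
        rw [h1, show c * g 0 ^ 2 * ‖(0:ℂ)‖⁻¹ = 0 by simp,
          show g 0 = 1 by simp [hg_def], zero_smul ℝ (Q 0), add_zero, one_smul]
      rw [hf'0]
      rw [hasFDerivAt_iff_isLittleO_nhds_zero]
      have hφ : Filter.Tendsto (fun h : ℂ => g h - 1) (𝓝 0) (𝓝 0) := by
        have : ContinuousAt g 0 := by
          apply ContinuousAt.inv₀
          · exact (continuous_const.sub (continuous_const.mul continuous_norm)).continuousAt
          · simpa using hden 0 (Metric.mem_ball_self hεpos)
        have h0 : g 0 = 1 := by simp [hg_def]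
        have := this.tendsto.sub_const 1
        rwa [h0, sub_self] at this
      have hlo : (fun h : ℂ => (g h - 1) • h) =o[𝓝 0] (fun h : ℂ => h) := by
        have h1 : (fun h : ℂ => g h - 1) =o[𝓝 0] (fun _ : ℂ => (1:ℝ)) :=
          (isLittleO_one_iff ℝ).2 hφ
        have := h1.smul_isBigO (isBigO_refl (fun h : ℂ => h) (𝓝 0))
        simpa using this
      apply hlo.congr' _ (Filter.EventuallyEq.refl _ _)
      filter_upwards with h
      simp only [zero_add, ContinuousLinearMap.coe_id', id_eq]
      rw [sub_smul, one_smul, show g 0 • (0:ℂ) = 0 from smul_zero _, sub_zero]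
    · -- derivative away from 0
      have hN := hasFDerivAt_norm_complex hρ0
      have hd : 1 - c * ‖ρ‖ ≠ 0 := hden ρ hρ
      have h1 : HasDerivAt (fun t : ℝ => (1 - c * t)⁻¹) (c * g ρ ^ 2) ‖ρ‖ := by
        have hbase : HasDerivAt (fun t : ℝ => 1 - c * t) (-c) ‖ρ‖ := by
          simpa using ((hasDerivAt_id (‖ρ‖)).const_mul c).const_sub 1
        have := hbase.inv hd
        refine this.congr_deriv ?_
        rw [hg_def]
        field_simp
      have hg' : HasFDerivAt g ((c * g ρ ^ 2 * ‖ρ‖⁻¹) • innerSL ℝ ρ) ρ := by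
        have := h1.comp_hasFDerivAt ρ hN
        refine this.congr_fderiv ?_
        ext v
        simp only [ContinuousLinearMap.smul_apply, smul_eq_mul]
        ring
      have := hg'.smul (hasFDerivAt_id ρ)
      refine this.congr_fderiv ?_
      ext v
      simp only [hf'_def, hQ_def, ContinuousLinearMap.add_apply,
        ContinuousLinearMap.smul_apply, ContinuousLinearMap.coe_id', id_eq,
        ContinuousLinearMap.smulRight_apply, ContinuousLinearMap.coe_smul',
        Pi.smul_apply, smul_eq_mul]
      module

/-- The coordinate change `ρ ↦ ρ / (1 - (log λ)·|ρ|)` is C¹ at the origin,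
regarding `ℂ ≅ ℝ²`. -/
theorem stmt0 (lam : ℝ) (hlam : 0 < lam) (hlam1 : lam ≠ 1) :
    ContDiffAt ℝ 1 (fun ρ : ℂ => ρ / (1 - (Real.log lam : ℂ) * (‖ρ‖ : ℂ))) 0 := by
  exact key (Real.log lam)
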